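/- Let α ∈ (0,1), let n_0 ≥ 1, and for each n let F_n : ℝ → [0,1] be nondecreasing, with the family {F_n : n ≥ n_0} uniformly equicontinuous. For each n, let Q_n be a real random variable, and let (ε_n) and (ν_n) be sequences of nonnegative reals converging to 0 such that for all n, E[F_n(Q_n + ε_n)] ≥ 1 − α − ν_n and E[F_n(Q_n − ε_n)] ≤ 1 − α + 1/(n + 1) + ν_n. Then lim_{n→∞} E[F_n(Q_n)] = 1 − α. -/
import Mathlib


open MeasureTheory Filter

/-- Let `α ∈ (0,1)`, `n₀ ≥ 1`, and for each `n` let `F n : ℝ → [0,1]` be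
nondecreasing, with the family `{F n : n ≥ n₀}` uniformly equicontinuous. For each `n`, let
`Q n` be a real random variable, and let `(e n)` and `(v n)` be nonnegative sequences
converging to `0` such that `E[F n (Q n + e n)] ≥ 1 − α − v n` and
`E[F n (Q n − e n)] ≤ 1 − α + 1/(n + 1) + v n` for all `n`. Then
`E[F n (Q n)] → 1 − α` as `n → ∞`. -/
theorem stmt19 {Ω : Type*} [MeasurableSpace Ω] (P : Measure Ω) [IsProbabilityMeasure P]
    (α : ℝ) (hα : α ∈ Set.Ioo (0:ℝ) 1)
    (n₀ : ℕ) (hn₀ : 1 ≤ n₀)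
    (F : ℕ → ℝ → ℝ)
    (hrange : ∀ n t, F n t ∈ Set.Icc (0:ℝ) 1)
    (hmono : ∀ n, Monotone (F n))
    (huec : ∀ η : ℝ, 0 < η → ∃ δ : ℝ, 0 < δ ∧
      ∀ n, n₀ ≤ n → ∀ s t : ℝ, |s - t| ≤ δ → |F n s - F n t| ≤ η)
    (Q : ℕ → Ω → ℝ) (hQ : ∀ n, Measurable (Q n))
    (e v : ℕ → ℝ) (he : ∀ n, 0 ≤ e n) (hv : ∀ n, 0 ≤ v n)
    (he0 : Tendsto e atTop (nhds 0)) (hv0 : Tendsto v atTop (nhds 0))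
    (hlow : ∀ n, 1 - α - v n ≤ ∫ ω, F n (Q n ω + e n) ∂P)
    (hup : ∀ n, ∫ ω, F n (Q n ω - e n) ∂P ≤ 1 - α + 1/((n:ℝ)+1) + v n) :
    Tendsto (fun n => ∫ ω, F n (Q n ω) ∂P) atTop (nhds (1 - α)) := by
  have hint : ∀ n (c : ℝ), Integrable (fun ω => F n (Q n ω + c)) P := by
    intro n c
    have hm : Measurable fun ω => F n (Q n ω + c) :=
      (hmono n).measurable.comp ((hQ n).add_const c)
    refine (integrable_const (1:ℝ)).mono' hm.aestronglyMeasurable ?_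
    filter_upwards with ω
    have h := hrange n (Q n ω + c)
    rw [Real.norm_eq_abs, abs_le]
    exact ⟨by linarith [h.1], by linarith [h.2]⟩
  have hint0 : ∀ n, Integrable (fun ω => F n (Q n ω)) P := by
    intro n; simpa using hint n 0
  rw [Metric.tendsto_atTop]
  intro ε hε
  obtain ⟨δ, hδ, hδ'⟩ := huec (ε/4) (by linarith)
  have hdiff : ∀ n (c : ℝ), n₀ ≤ n → |c| ≤ δ →
      |(∫ ω, F n (Q n ω) ∂P) - ∫ ω, F n (Q n ω + c) ∂P| ≤ ε/4 := by
    intro n c hn hc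
    rw [← integral_sub (hint0 n) (hint n c)]
    calc |∫ ω, (F n (Q n ω) - F n (Q n ω + c)) ∂P|
        ≤ ∫ ω, |F n (Q n ω) - F n (Q n ω + c)| ∂P := by
          simpa [Real.norm_eq_abs] using
            norm_integral_le_integral_norm (fun ω => F n (Q n ω) - F n (Q n ω + c)) (μ := P)
      _ ≤ ∫ _ω, (ε/4) ∂P := by
          refine integral_mono ((hint0 n).sub (hint n c)).abs (integrable_const _) ?_
          intro ω
          refine hδ' n hn _ _ ?_
          simpa using hc
      _ = ε/4 := by simp
  have h1 : ∀ᶠ n in atTop, e n < δ := he0.eventually (gt_mem_nhds hδ)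
  have h2 : ∀ᶠ n in atTop, v n < ε/4 := hv0.eventually (gt_mem_nhds (by linarith))
  have h3 : ∀ᶠ n : ℕ in atTop, 1/((n:ℝ)+1) < ε/4 := by
    have ht : Tendsto (fun n : ℕ => 1/((n:ℝ)+1)) atTop (nhds 0) :=
      tendsto_one_div_add_atTop_nhds_zero_nat
    exact ht.eventually (gt_mem_nhds (by linarith))
  have h4 : ∀ᶠ n in atTop, n₀ ≤ n := eventually_ge_atTop n₀
  obtain ⟨N, hN⟩ := eventually_atTop.mp ((h1.and (h2.and (h3.and h4))))
  refine ⟨N, fun n hn => ?_⟩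
  obtain ⟨hne, hnv, hn1, hnn⟩ := hN n hn
  have hlo := hlow n
  have hu := hup n
  have hd1 := hdiff n (e n) hnn (by rw [abs_of_nonneg (he n)]; linarith)
  have hd2 := hdiff n (-e n) hnn (by rw [abs_neg, abs_of_nonneg (he n)]; linarith)
  rw [show (fun ω => F n (Q n ω - e n)) = fun ω => F n (Q n ω + (-e n)) by
    funext ω; rw [sub_eq_add_neg]] at hu
  rw [Real.dist_eq, abs_lt]
  rw [abs_le] at hd1 hd2
  constructor <;> linarith [hd1.1, hd1.2, hd2.1, hd2.2]
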